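/- Let c > 0, ū₀ ∈ [0,1], and let μ̄* be the unique μ̄ ∈ [0,1] satisfying μ̄ = (U₁(c,μ̄) − U₂(c,μ̄) + 1 + ū₀)/3. Then |μ̄* − 1/2| ≤ |ū₀ − 1/2|, with strict inequality whenever ū₀ ≠ 1/2; moreover 0 < μ̄* < 1, so the equilibrium market shares are never polarized. -/

import Mathlib

/-- Equilibrium advertisement efficiency of major player 1 in the two-major-player
game, given unit advertisement cost `c` and mean consumer preference `m`. -/
noncomputable def U1 (c m : ℝ) : ℝ :=
  -(m ^ 2 + 2 * c * m - m - c + c ^ 2 -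
      Real.sqrt ((c + m) * (c ^ 2 + 5 * c - m ^ 2 + m) * (c - m + 1))) / (2 * c * (c + m))

/-- Equilibrium advertisement efficiency of major player 2 in the two-major-player
game, given unit advertisement cost `c` and mean consumer preference `m`. -/
noncomputable def U2 (c m : ℝ) : ℝ :=
  (m - c + Real.sqrt ((c + m) * (c ^ 2 + 5 * c - m ^ 2 + m) / (c - m + 1))) / (2 * c)

theorem stmt_10 (c ubar₀ mstar : ℝ) (hc : 0 < c) (h₀ : ubar₀ ∈ Set.Icc (0 : ℝ) 1)
    (hmem : mstar ∈ Set.Icc (0 : ℝ) 1)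
    (hfix : mstar = (U1 c mstar - U2 c mstar + 1 + ubar₀) / 3) :
    |mstar - 1 / 2| ≤ |ubar₀ - 1 / 2| ∧
    (ubar₀ ≠ 1 / 2 → |mstar - 1 / 2| < |ubar₀ - 1 / 2|) ∧
    0 < mstar ∧ mstar < 1 := by
  obtain ⟨h0a, h0b⟩ := h₀
  obtain ⟨hma, hmb⟩ := hmem
  set m := mstar with hm
  have hd : (0:ℝ) < c - m + 1 := by linarith
  have hcm : (0:ℝ) < c + m := by linarith
  set S := Real.sqrt ((c + m) * (c ^ 2 + 5 * c - m ^ 2 + m) / (c - m + 1)) with hS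
  have hS0 : 0 ≤ S := Real.sqrt_nonneg _
  have hsqrt : Real.sqrt ((c + m) * (c ^ 2 + 5 * c - m ^ 2 + m) * (c - m + 1))
      = (c - m + 1) * S := by
    rw [hS, ← Real.sqrt_sq hd.le, ← Real.sqrt_mul (sq_nonneg _)]
    congr 1
    simp only [Real.sqrt_sq hd.le]
    field_simp
  have hK : 0 < (m + c + S) / (2 * c * (c + m)) := by positivity
  set K := (m + c + S) / (2 * c * (c + m)) with hKdef
  have hdiff : U1 c m - U2 c m = (1 - 2 * m) * K := by
    rw [U1, U2, ← hS, hsqrt, hKdef]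
    field_simp
    ring
  have h3 := hfix
  rw [hdiff] at h3
  have hkey : (m - 1 / 2) * (3 + 2 * K) = ubar₀ - 1 / 2 := by
    linear_combination 3 * h3
  have habs : |m - 1 / 2| * (3 + 2 * K) = |ubar₀ - 1 / 2| := by
    rw [← abs_of_pos (show (0:ℝ) < 3 + 2 * K by linarith), ← abs_mul, hkey]
  have hmn : (0:ℝ) ≤ |m - 1 / 2| := abs_nonneg _
  have h1 : |m - 1 / 2| ≤ |ubar₀ - 1 / 2| := by nlinarith
  have hub : |ubar₀ - 1 / 2| ≤ 1 / 2 := by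
    rw [abs_le]; constructor <;> linarith
  have hmb' : |m - 1 / 2| ≤ 1 / 6 := by nlinarith
  rw [abs_le] at hmb'
  refine ⟨h1, ?_, by linarith [hmb'.1], by linarith [hmb'.2]⟩
  intro hne
  have hupos : 0 < |ubar₀ - 1 / 2| := abs_pos.mpr (sub_ne_zero.mpr hne)
  nlinarith
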